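/- Let f be the characteristic function of a non-degenerate real random variable X (i.e., X is not almost surely constant), so f(t) = E[exp(i t X)]. Then there exist positive constants α and β such that |f(t)| ≤ 1 − α t² for all real t with |t| ≤ β. -/

import Mathlib

open MeasureTheory Complex

lemma exp_integrable (ν : Measure ℝ) [IsProbabilityMeasure ν] (t : ℝ) :
    Integrable (fun x : ℝ => Complex.exp (Complex.I * t * x)) ν := by
  refine (integrable_const (1:ℝ)).mono' ?_ (ae_of_all _ fun x => ?_)
  · exact (Complex.continuous_exp.comp (by continuity)).aestronglyMeasurable
  · simp [Complex.norm_exp]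

lemma abs_sq_eq (ν : Measure ℝ) [IsProbabilityMeasure ν] (t : ℝ) :
    (‖∫ x, Complex.exp (Complex.I * t * x) ∂ν‖) ^ 2
      = ∫ p : ℝ × ℝ, Real.cos (t * (p.1 - p.2)) ∂(ν.prod ν) := by
  set z := ∫ x, Complex.exp (Complex.I * t * x) ∂ν with hz
  have h1 : (‖z‖)^2 = (z * (starRingEnd ℂ) z).re := by
    rw [Complex.mul_conj]; simp [Complex.sq_norm]
  have hconj : (starRingEnd ℂ) z = ∫ y, Complex.exp (-(Complex.I * t * y)) ∂ν := by
    rw [hz, ← integral_conj]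
    congr 1; ext y
    rw [← Complex.exp_conj]
    congr 1
    simp [map_mul]
  have hprod : z * (starRingEnd ℂ) z
      = ∫ p : ℝ × ℝ, Complex.exp (Complex.I * t * p.1) * Complex.exp (-(Complex.I * t * p.2)) ∂(ν.prod ν) := by
    rw [hconj, hz, ← integral_prod_mul]
  have hint : Integrable (fun p : ℝ × ℝ =>
      Complex.exp (Complex.I * t * p.1) * Complex.exp (-(Complex.I * t * p.2))) (ν.prod ν) := by
    refine (integrable_const (1:ℝ)).mono' ?_ (ae_of_all _ fun p => ?_)
    · exact (Complex.continuous_exp.comp (by continuity)).mul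
        ((Complex.continuous_exp.comp (by continuity))) |>.aestronglyMeasurable
    · simp [Complex.norm_exp]
  rw [h1, hprod, ← RCLike.re_to_complex, ← integral_re hint]
  congr 1; ext p
  have : Complex.exp (Complex.I * t * p.1) * Complex.exp (-(Complex.I * t * p.2))
      = Complex.exp ((t * (p.1 - p.2) : ℝ) * Complex.I) := by
    rw [← Complex.exp_add]; congr 1; push_cast; ring
  rw [this, RCLike.re_to_complex, Complex.exp_ofReal_mul_I_re]

lemma sep_pos (ν : Measure ℝ) [IsProbabilityMeasure ν]
    (hnd : ¬ ∃ c : ℝ, ν {c}ᶜ = 0) :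
    ∃ δ > (0:ℝ), 0 < (ν.prod ν) {p : ℝ × ℝ | δ ≤ |p.1 - p.2|} := by
  by_contra h
  push_neg at h
  have hzero : ∀ n : ℕ, (ν.prod ν) {p : ℝ × ℝ | 1/(n+1:ℝ) ≤ |p.1 - p.2|} = 0 := by
    intro n
    exact le_antisymm (h _ (by positivity)) zero_le
  have hdiag : (ν.prod ν) {p : ℝ × ℝ | p.1 ≠ p.2} = 0 := by
    refine measure_mono_null (fun p hp => ?_) (measure_iUnion_null hzero)
    have hpos : 0 < |p.1 - p.2| := by
      simp only [Set.mem_setOf_eq] at hp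
      simpa [sub_eq_zero] using hp
    obtain ⟨n, hn⟩ := exists_nat_one_div_lt hpos
    exact Set.mem_iUnion.2 ⟨n, hn.le⟩
  have hmeas : MeasurableSet {p : ℝ × ℝ | p.1 ≠ p.2} :=
    (measurableSet_eq_fun measurable_fst measurable_snd).compl
  rw [Measure.prod_apply hmeas] at hdiag
  have hae : ∀ᵐ x ∂ν, ν (Prod.mk x ⁻¹' {p : ℝ × ℝ | p.1 ≠ p.2}) = 0 := by
    exact (lintegral_eq_zero_iff (measurable_measure_prodMk_left hmeas)).mp hdiag
  obtain ⟨c, hc⟩ := hae.exists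
  refine hnd ⟨c, ?_⟩
  convert hc using 2
  ext y
  simp [ne_comm, eq_comm]

/-- **Lin's theorem.** If `f` is the characteristic function of a non-degenerate
real random variable `X` (i.e. `X` is not almost surely constant), then there are
positive constants `α, β` such that `|f t| ≤ 1 - α * t ^ 2` whenever `|t| ≤ β`. -/
theorem charFun_le_one_sub_mul_sq
    {Ω : Type*} [MeasurableSpace Ω] (μ : Measure Ω) [IsProbabilityMeasure μ]
    (X : Ω → ℝ) (hX : Measurable X)
    (hnd : ¬ ∃ c : ℝ, ∀ᵐ ω ∂μ, X ω = c) :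
    ∃ α > (0 : ℝ), ∃ β > (0 : ℝ), ∀ t : ℝ, |t| ≤ β →
      ‖∫ ω, Complex.exp (Complex.I * t * X ω) ∂μ‖ ≤ 1 - α * t ^ 2 := by
  set ν := μ.map X with hνdef
  haveI hνprob : IsProbabilityMeasure ν := Measure.isProbabilityMeasure_map hX.aemeasurable
  have hnd' : ¬ ∃ c : ℝ, ν {c}ᶜ = 0 := by
    rintro ⟨c, hc⟩
    refine hnd ⟨c, ?_⟩
    rw [hνdef, Measure.map_apply hX (measurableSet_singleton c).compl] at hc
    rw [ae_iff]
    convert hc using 2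
    ext ω; simp
  obtain ⟨δ, hδ, hA⟩ := sep_pos ν hnd'
  set π := ν.prod ν with hπdef
  haveI : IsProbabilityMeasure π := by rw [hπdef]; infer_instance
  set A := {p : ℝ × ℝ | δ ≤ |p.1 - p.2|} with hAdef
  have hAmeas : MeasurableSet A :=
    measurableSet_le measurable_const (measurable_fst.sub measurable_snd).abs
  -- choose n
  have hmono : Monotone (fun n : ℕ => A ∩ {p : ℝ × ℝ | |p.1| ≤ n ∧ |p.2| ≤ n}) := by
    intro a b hab p hp
    exact ⟨hp.1, hp.2.1.trans (Nat.cast_le.2 hab), hp.2.2.trans (Nat.cast_le.2 hab)⟩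
  have hunion : (⋃ n : ℕ, A ∩ {p : ℝ × ℝ | |p.1| ≤ n ∧ |p.2| ≤ n}) = A := by
    apply Set.Subset.antisymm
    · exact Set.iUnion_subset fun n => Set.inter_subset_left
    · intro p hp
      obtain ⟨n, hn⟩ := exists_nat_ge (max |p.1| |p.2|)
      exact Set.mem_iUnion.2 ⟨n, hp, (le_max_left _ _).trans hn, (le_max_right _ _).trans hn⟩
  have htends := tendsto_measure_iUnion_atTop (μ := π) hmono
  rw [hunion] at htends
  have hhalf : π A / 2 < π A := ENNReal.half_lt_self hA.ne' (measure_ne_top π A)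
  obtain ⟨n, hn⟩ := (htends.eventually (eventually_gt_nhds hhalf)).exists
  set S := A ∩ {p : ℝ × ℝ | |p.1| ≤ n ∧ |p.2| ≤ n} with hSdef
  have hSmeas : MeasurableSet S :=
    hAmeas.inter ((measurableSet_le (measurable_fst.abs) measurable_const).inter
      (measurableSet_le (measurable_snd.abs) measurable_const))
  have hSpos : 0 < π S := lt_of_le_of_lt zero_le hn
  set M : ℝ := (n : ℝ) + 1 with hMdef
  have hM : 0 < M := by positivity
  have hnM : (n : ℝ) ≤ M := by simp [hMdef]
  -- δ ≤ 2M since S is nonempty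
  obtain ⟨p₀, hp₀⟩ := nonempty_of_measure_ne_zero hSpos.ne'
  have hδ2M : δ ≤ 2 * M := by
    have h1 : δ ≤ |p₀.1 - p₀.2| := hp₀.1
    have h2 : |p₀.1 - p₀.2| ≤ |p₀.1| + |p₀.2| := abs_sub _ _
    have := hp₀.2.1; have := hp₀.2.2
    linarith [hp₀.2.1, hp₀.2.2]
  set r : ℝ := (π S).toReal with hrdef
  have hr : 0 < r := ENNReal.toReal_pos hSpos.ne' (measure_ne_top _ _)
  have hr1 : r ≤ 1 := by
    rw [hrdef]
    exact ENNReal.toReal_le_of_le_ofReal one_pos.le (by simpa using prob_le_one (μ := π) (s := S))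
  set c₁ : ℝ := 2 / Real.pi ^ 2 with hc₁def
  have hc₁ : 0 < c₁ := by positivity
  have hc₁le : c₁ ≤ 1 := by
    rw [hc₁def, div_le_one (by positivity)]
    nlinarith [Real.pi_gt_three]
  set K : ℝ := c₁ * δ ^ 2 * r with hKdef
  have hK : 0 < K := by positivity
  clear_value K
  refine ⟨K / 2, by positivity, 1 / (2 * M), by positivity, fun t ht => ?_⟩
  -- basic t facts
  have ht2 : t ^ 2 ≤ (1 / (2 * M)) ^ 2 := by
    calc t ^ 2 = |t| ^ 2 := (_root_.sq_abs t).symm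
      _ ≤ (1 / (2 * M)) ^ 2 := pow_le_pow_left₀ (abs_nonneg t) ht 2
  have hKt : K * t ^ 2 ≤ 1 := by
    have hδsq : δ ^ 2 ≤ (2 * M) ^ 2 := pow_le_pow_left₀ hδ.le hδ2M 2
    have h1 : K ≤ c₁ * (2 * M) ^ 2 := by
      rw [hKdef]
      calc c₁ * δ ^ 2 * r ≤ c₁ * δ ^ 2 * 1 :=
            mul_le_mul_of_nonneg_left hr1 (by positivity)
        _ = c₁ * δ ^ 2 := by ring
        _ ≤ c₁ * (2 * M) ^ 2 := mul_le_mul_of_nonneg_left hδsq hc₁.le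
    have h2 : K * t ^ 2 ≤ c₁ * (2 * M) ^ 2 * (1 / (2 * M)) ^ 2 :=
      mul_le_mul h1 ht2 (sq_nonneg t) (by positivity)
    have h3 : c₁ * (2 * M) ^ 2 * (1 / (2 * M)) ^ 2 = c₁ := by
      field_simp
    rw [h3] at h2
    linarith
  -- rewrite integral over μ as integral over ν
  have hcont : Continuous fun x : ℝ => Complex.exp (Complex.I * t * x) := by
    exact Complex.continuous_exp.comp (continuous_const.mul Complex.continuous_ofReal)
  have hmap : ∫ ω, Complex.exp (Complex.I * t * X ω) ∂μ
      = ∫ x, Complex.exp (Complex.I * t * x) ∂ν := by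
    rw [hνdef]
    exact (integral_map hX.aemeasurable hcont.aestronglyMeasurable).symm
  rw [hmap]
  set f : ℝ := ‖∫ x, Complex.exp (Complex.I * t * x) ∂ν‖ with hfdef
  have hf0 : 0 ≤ f := norm_nonneg _
  have hsq : f ^ 2 = ∫ p : ℝ × ℝ, Real.cos (t * (p.1 - p.2)) ∂π := abs_sq_eq ν t
  -- integrability of the cosine integrand
  have hgint : Integrable (fun p : ℝ × ℝ => Real.cos (t * (p.1 - p.2))) π := by
    refine (integrable_const (1:ℝ)).mono' ?_ (ae_of_all _ fun p => ?_)
    · exact (Real.continuous_cos.comp ((continuous_const.mul (continuous_fst.sub continuous_snd)))).aestronglyMeasurable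
    · simpa using Real.abs_cos_le_one _
  have hgint' : Integrable (fun p : ℝ × ℝ => 1 - Real.cos (t * (p.1 - p.2))) π :=
    (integrable_const 1).sub hgint
  -- pointwise bound on S
  have hpoint : ∀ p ∈ S, c₁ * δ ^ 2 * t ^ 2 ≤ 1 - Real.cos (t * (p.1 - p.2)) := by
    intro p hp
    have h1 : δ ≤ |p.1 - p.2| := hp.1
    have h2 : |p.1| ≤ (n : ℝ) := hp.2.1
    have h3 : |p.2| ≤ (n : ℝ) := hp.2.2
    have habs : |t * (p.1 - p.2)| ≤ 1 := by
      rw [abs_mul]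
      have h4 : |p.1 - p.2| ≤ 2 * M := by
        have := abs_sub p.1 p.2
        linarith [abs_sub p.1 p.2]
      calc |t| * |p.1 - p.2| ≤ (1 / (2 * M)) * (2 * M) :=
            mul_le_mul ht h4 (abs_nonneg _) (by positivity)
        _ = 1 := by field_simp
    have hπle : |t * (p.1 - p.2)| ≤ Real.pi := habs.trans (by linarith [Real.pi_gt_three])
    have hcos := Real.cos_le_one_sub_mul_cos_sq hπle
    have hsq2 : δ ^ 2 ≤ (p.1 - p.2) ^ 2 := by
      calc δ ^ 2 ≤ |p.1 - p.2| ^ 2 := pow_le_pow_left₀ hδ.le h1 2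
        _ = (p.1 - p.2) ^ 2 := _root_.sq_abs _
    have hkey : c₁ * δ ^ 2 * t ^ 2 ≤ c₁ * (t * (p.1 - p.2)) ^ 2 := by
      have h := mul_le_mul_of_nonneg_left hsq2 (mul_nonneg hc₁.le (sq_nonneg t))
      calc c₁ * δ ^ 2 * t ^ 2 = c₁ * t ^ 2 * δ ^ 2 := by ring
        _ ≤ c₁ * t ^ 2 * (p.1 - p.2) ^ 2 := h
        _ = c₁ * (t * (p.1 - p.2)) ^ 2 := by ring
    rw [← hc₁def] at hcos
    linarith [hcos, hkey]
  -- integral bound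
  have hbound : f ^ 2 ≤ 1 - K * t ^ 2 := by
    rw [hsq]
    have h1 : (1 : ℝ) - ∫ p : ℝ × ℝ, Real.cos (t * (p.1 - p.2)) ∂π
        = ∫ p : ℝ × ℝ, (1 - Real.cos (t * (p.1 - p.2))) ∂π := by
      rw [integral_sub (integrable_const 1) hgint, integral_const]
      simp
    have h2 : c₁ * δ ^ 2 * t ^ 2 * r
        ≤ ∫ p in S, (1 - Real.cos (t * (p.1 - p.2))) ∂π :=
      by have := setIntegral_ge_of_const_le hSmeas (measure_ne_top _ _) hpoint hgint'.integrableOn; rw [smul_eq_mul, measureReal_def, ← hrdef] at this; linarith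
    have h3 : (∫ p in S, (1 - Real.cos (t * (p.1 - p.2))) ∂π)
        ≤ ∫ p : ℝ × ℝ, (1 - Real.cos (t * (p.1 - p.2))) ∂π :=
      setIntegral_le_integral hgint' (ae_of_all _ fun p => by
        simpa using Real.cos_le_one (t * (p.1 - p.2)))
    have hKeq : K * t ^ 2 = c₁ * δ ^ 2 * t ^ 2 * r := by rw [hKdef]; ring
    linarith
  -- conclude
  have hb0 : 0 ≤ 1 - K / 2 * t ^ 2 := by nlinarith [hKt, hK.le, sq_nonneg t]
  have : f ^ 2 ≤ (1 - K / 2 * t ^ 2) ^ 2 := by nlinarith [hbound, sq_nonneg (K * t ^ 2)]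
  calc f = Real.sqrt (f ^ 2) := (Real.sqrt_sq hf0).symm
    _ ≤ Real.sqrt ((1 - K / 2 * t ^ 2) ^ 2) := Real.sqrt_le_sqrt this
    _ = 1 - K / 2 * t ^ 2 := Real.sqrt_sq hb0
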